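/- For positive integers p, q, r with p + q + r = n, the triple ratio of the three Veronese flags ξ(∞), ξ(1), ξ(0) in Sym^{n−1}ℝ² is positive; equivalently, the triangle invariant τ_{pqr} = log T_{pqr}(ξ(∞), ξ(1), ξ(0)) of any n-Fuchsian representation is a well-defined real number. -/

import Mathlib

/-- The wedge of three tuples of vectors, as a determinant in the standard basis. -/
noncomputable def wedge {n p q r : ℕ} (h : p + q + r = n)
    (u : Fin p → (Fin n → ℝ)) (v : Fin q → (Fin n → ℝ)) (w : Fin r → (Fin n → ℝ)) : ℝ :=
  Matrix.det (Matrix.of fun i j => Fin.append (Fin.append u v) w (Fin.cast h.symm i) j)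

/-- `X(p,q,r) = e^(p) ∧ f^(q) ∧ g^(r)`. -/
noncomputable def Xw (n : ℕ) (e f g : (i : ℕ) → Fin i → (Fin n → ℝ)) (p q r : ℕ) : ℝ :=
  if h : p + q + r = n then wedge h (e p) (f q) (g r) else 0

/-- The triple ratio `T_{pqr}`. -/
noncomputable def tripleRatio (n : ℕ) (e f g : (i : ℕ) → Fin i → (Fin n → ℝ))
    (p q r : ℕ) : ℝ :=
  (Xw n e f g (p+1) q (r-1) / Xw n e f g (p-1) q (r+1)) *
  (Xw n e f g p (q-1) (r+1) / Xw n e f g p (q+1) (r-1)) *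
  (Xw n e f g (p-1) (q+1) r / Xw n e f g (p+1) (q-1) r)

/-- The Veronese flag `ξ(r)` in coordinates (basis `b_m = X^{n−m}Y^{m−1}` of
`Sym^{n−1}ℝ²`): `ξ(r)^(i)` is spanned by the coefficient vectors of
`(rX+Y)^{n−i}X^{i−1−k}Y^k`, and `ξ(∞)^(i)` by `b_1, …, b_i`. -/
noncomputable def ver (n : ℕ) : Option ℝ → (i : ℕ) → Fin i → (Fin n → ℝ)
  | some r => fun i k m =>
      if (k : ℕ) ≤ (m : ℕ) then
        ((n - i).choose ((m : ℕ) - (k : ℕ)) : ℝ) * r ^ ((n - i) - ((m : ℕ) - (k : ℕ)))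
      else 0
  | none => fun _ k m => if (m : ℕ) = (k : ℕ) then 1 else 0

section TRaux
open Matrix Finset

open Matrix Finset Equiv

open scoped Classical in
theorem TR_cauchyBinet {m N : ℕ} (A : Matrix (Fin m) (Fin N) ℝ) (B : Matrix (Fin N) (Fin m) ℝ) :
    (A * B).det = ∑ f ∈ Finset.univ.filter (fun f : Fin m → Fin N => StrictMono f),
      (A.submatrix id f).det * (B.submatrix f id).det := by
  have step1 : (A * B).det
      = ∑ k : Fin m → Fin N, (∏ i, B (k i) i) * (A.submatrix id k).det := by
    simp only [det_apply', mul_apply, Finset.prod_univ_sum, Fintype.piFinset_univ,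
      Finset.mul_sum]
    rw [Finset.sum_comm]
    refine Finset.sum_congr rfl fun k _ => ?_
    refine Finset.sum_congr rfl fun σ _ => ?_
    rw [Finset.prod_mul_distrib]
    simp only [submatrix_apply, id_eq]
    ring
  have step2 : (A * B).det
      = ∑ k ∈ Finset.univ.filter (fun k : Fin m → Fin N => Function.Injective k),
          (∏ i, B (k i) i) * (A.submatrix id k).det := by
    rw [step1]
    refine (Finset.sum_subset (Finset.filter_subset _ _) fun k _ hk => ?_).symm
    simp only [Finset.mem_filter, Finset.mem_univ, true_and] at hk
    obtain ⟨i, j, hij, hne⟩ : ∃ i j, k i = k j ∧ i ≠ j := by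
      unfold Function.Injective at hk; push_neg at hk
      obtain ⟨i, j, h1, h2⟩ := hk; exact ⟨i, j, h1, h2⟩
    have : (A.submatrix id k).det = 0 :=
      Matrix.det_zero_of_column_eq hne fun t => by simp [hij]
    rw [this, mul_zero]
  rw [step2]
  -- now group by image
  have key : ∀ k : Fin m → Fin N, Function.Injective k →
      ∃ (f : Fin m → Fin N) (σ : Equiv.Perm (Fin m)), StrictMono f ∧ k = f ∘ σ := by
    intro k hk
    set s : Finset (Fin N) := Finset.univ.image k with hs_def
    have hs : s.card = m := by
      rw [hs_def, Finset.card_image_of_injective _ hk, Finset.card_univ, Fintype.card_fin]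
    set f : Fin m → Fin N := fun i => s.orderEmbOfFin hs i with hf_def
    have hmem : ∀ i, k i ∈ s := fun i => Finset.mem_image_of_mem _ (Finset.mem_univ i)
    have hcard : Fintype.card (Fin m) = Fintype.card s := by
      simp [Fintype.card_coe, hs]
    let e1 : Fin m ≃ s := Equiv.ofBijective (fun i => ⟨k i, hmem i⟩)
      ((Fintype.bijective_iff_injective_and_card _).2
        ⟨fun a b hab => hk (Subtype.ext_iff.1 hab), hcard⟩)
    let e2 : Fin m ≃ s := Equiv.ofBijective (fun i => ⟨f i, s.orderEmbOfFin_mem hs i⟩)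
      ((Fintype.bijective_iff_injective_and_card _).2
        ⟨fun a b hab => (s.orderEmbOfFin hs).injective (Subtype.ext_iff.1 hab), hcard⟩)
    refine ⟨f, e1.trans e2.symm, (s.orderEmbOfFin hs).strictMono, ?_⟩
    funext i
    show k i = f ((e1.trans e2.symm) i)
    calc k i = ((e1 i : s) : Fin N) := rfl
    _ = ((e2 (e2.symm (e1 i)) : s) : Fin N) := by rw [e2.apply_symm_apply]
    _ = f (e2.symm (e1 i)) := rfl
  rw [show (Finset.univ.filter (fun k : Fin m → Fin N => Function.Injective k))
      = Finset.univ.filter (fun k => Function.Injective k) from rfl]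
  have step3 : ∑ k ∈ Finset.univ.filter (fun k : Fin m → Fin N => Function.Injective k),
      (∏ i, B (k i) i) * (A.submatrix id k).det
      = ∑ fσ ∈ (Finset.univ.filter (fun f : Fin m → Fin N => StrictMono f)) ×ˢ
          (Finset.univ : Finset (Equiv.Perm (Fin m))),
        (∏ i, B (fσ.1 (fσ.2 i)) i) *
          ((Equiv.Perm.sign fσ.2 : ℝ) * (A.submatrix id fσ.1).det) := by
    refine (Finset.sum_bij (fun fσ _ => fσ.1 ∘ fσ.2) ?_ ?_ ?_ ?_).symm
    · rintro ⟨f, σ⟩ hmem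
      simp only [Finset.mem_product, Finset.mem_filter, Finset.mem_univ, true_and] at hmem ⊢
      exact hmem.1.injective.comp σ.injective
    · rintro ⟨f1, σ1⟩ h1 ⟨f2, σ2⟩ h2 heq
      simp only [Finset.mem_product, Finset.mem_filter, Finset.mem_univ, true_and,
        and_true] at h1 h2
      have heq' : f1 ∘ σ1 = f2 ∘ σ2 := heq
      have himg : Finset.univ.image (f1 ∘ σ1) = Finset.univ.image (f2 ∘ σ2) := by rw [heq']
      have himg1 : Finset.univ.image (f1 ∘ σ1) = Finset.univ.image f1 := by
        rw [← Finset.image_image]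
        congr 1
        exact Finset.image_univ_equiv σ1
      have himg2 : Finset.univ.image (f2 ∘ σ2) = Finset.univ.image f2 := by
        rw [← Finset.image_image]
        congr 1
        exact Finset.image_univ_equiv σ2
      have hs' : Finset.univ.image f2 = Finset.univ.image f1 := by
        rw [← himg1, ← himg2, ← himg]
      have hcard1 : (Finset.univ.image f1).card = m := by
        rw [Finset.card_image_of_injective _ h1.injective, Finset.card_univ, Fintype.card_fin]
      have hf1 : f1 = fun i => (Finset.univ.image f1).orderEmbOfFin hcard1 i := by
        have := Finset.orderEmbOfFin_unique hcard1
          (f := f1) (fun x => Finset.mem_image_of_mem _ (Finset.mem_univ x)) h1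
        exact this
      have hf2 : f2 = fun i => (Finset.univ.image f1).orderEmbOfFin hcard1 i := by
        have := Finset.orderEmbOfFin_unique hcard1
          (f := f2) (fun x => hs' ▸ Finset.mem_image_of_mem _ (Finset.mem_univ x)) h2
        exact this
      have hff : f1 = f2 := by rw [hf1, hf2]
      subst hff
      have hσ : σ1 = σ2 := by
        ext i
        have := congrFun heq' i
        simp only [Function.comp_apply] at this
        exact congrArg Fin.val (h1.injective this)
      rw [hσ]
    · intro k hk
      simp only [Finset.mem_filter, Finset.mem_univ, true_and] at hk
      obtain ⟨f, σ, hf, hkeq⟩ := key k hk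
      exact ⟨⟨f, σ⟩, Finset.mem_product.2 ⟨Finset.mem_filter.2 ⟨Finset.mem_univ _, hf⟩,
        Finset.mem_univ _⟩, hkeq.symm⟩
    · rintro ⟨f, σ⟩ _
      have hsub : A.submatrix id (f ∘ σ) = (A.submatrix id f).submatrix id σ := rfl
      show (∏ i, B (f (σ i)) i) * ((Equiv.Perm.sign σ : ℝ) * (A.submatrix id f).det)
          = (∏ i, B ((f ∘ ⇑σ) i) i) * (A.submatrix id (f ∘ ⇑σ)).det
      rw [hsub, Matrix.det_permute']
      simp [Function.comp_apply]
  rw [step3, Finset.sum_product]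
  refine Finset.sum_congr rfl fun f hf => ?_
  rw [Matrix.det_apply' (B.submatrix f id)]
  simp only [Matrix.submatrix_apply, id_eq]
  rw [Finset.mul_sum]
  refine Finset.sum_congr rfl fun σ _ => ?_
  ring

/-- cofactor expansion when row 0 is `(a, 0, …, 0)` -/
theorem TR_det_row0 {q : ℕ} (A : Matrix (Fin (q + 1)) (Fin (q + 1)) ℝ)
    (h : ∀ j : Fin (q + 1), j ≠ 0 → A 0 j = 0) :
    A.det = A 0 0 * (A.submatrix Fin.succ Fin.succ).det := by
  rw [Matrix.det_succ_row_zero]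
  rw [Finset.sum_eq_single 0]
  · simp [Fin.succAbove_zero]
  · intro j _ hj
    rw [h j hj]; ring
  · simp
/-- cofactor expansion when column 0 is `(a, 0, …, 0)ᵀ` -/
theorem TR_det_col0 {q : ℕ} (A : Matrix (Fin (q + 1)) (Fin (q + 1)) ℝ)
    (h : ∀ i : Fin (q + 1), i ≠ 0 → A i 0 = 0) :
    A.det = A 0 0 * (A.submatrix Fin.succ Fin.succ).det := by
  rw [Matrix.det_succ_column_zero]
  rw [Finset.sum_eq_single 0]
  · simp [Fin.succAbove_zero]
  · intro j _ hj
    rw [h j hj]; ring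
  · simp

/-- staircase 0/1 matrices have nonnegative determinant -/
theorem TR_staircase {e : ℕ} (he : e ≤ 1) :
    ∀ (q : ℕ) (g f : Fin q → ℕ), StrictMono g → StrictMono f →
    0 ≤ (Matrix.of fun i j : Fin q =>
      if f j ≤ g i ∧ g i ≤ f j + e then (1 : ℝ) else 0).det := by
  intro q
  induction q with
  | zero => intro g f _ _; rw [Matrix.det_isEmpty]; norm_num
  | succ q ih =>
    intro g f hg hf
    rcases lt_trichotomy (f 0) (g 0) with hlt | heq | hgt
    · -- f 0 < g 0
      rcases Nat.lt_or_ge (f 0 + e) (g 0) with hcol | hcol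
      · -- column 0 is zero
        rw [Matrix.det_eq_zero_of_column_eq_zero 0]
        intro i
        have : ¬ (g i ≤ f 0 + e) := by
          have : g 0 ≤ g i := hg.monotone (Fin.zero_le i)
          omega
        simp only [Matrix.of_apply]
        rw [if_neg (by tauto)]
      · -- g 0 = f 0 + 1, e = 1 : column 0 = e_0
        have he1 : e = 1 := by omega
        have hg0 : g 0 = f 0 + 1 := by omega
        rw [TR_det_col0]
        · have h00 : (Matrix.of fun i j : Fin (q+1) =>
              if f j ≤ g i ∧ g i ≤ f j + e then (1 : ℝ) else 0) 0 0 = 1 := by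
            simp only [Matrix.of_apply]; rw [if_pos ⟨by omega, by omega⟩]
          rw [h00, one_mul]
          have := ih (g ∘ Fin.succ) (f ∘ Fin.succ)
            (hg.comp Fin.strictMono_succ) (hf.comp Fin.strictMono_succ)
          convert this using 2
          rfl
        · intro i hi
          have hgi : g 0 < g i := hg (Fin.pos_iff_ne_zero.2 hi)
          simp only [Matrix.of_apply]
          rw [if_neg (by omega)]
    · -- f 0 = g 0 : row 0 = e_0
      rw [TR_det_row0]
      · have h00 : (Matrix.of fun i j : Fin (q+1) =>
            if f j ≤ g i ∧ g i ≤ f j + e then (1 : ℝ) else 0) 0 0 = 1 := by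
          simp only [Matrix.of_apply]; rw [if_pos ⟨by omega, by omega⟩]
        rw [h00, one_mul]
        have := ih (g ∘ Fin.succ) (f ∘ Fin.succ)
          (hg.comp Fin.strictMono_succ) (hf.comp Fin.strictMono_succ)
        convert this using 2
        rfl
      · intro j hj
        have hfj : f 0 < f j := hf (Fin.pos_iff_ne_zero.2 hj)
        simp only [Matrix.of_apply]
        rw [if_neg (by omega)]
    · -- g 0 < f 0 : row 0 is zero
      rw [Matrix.det_eq_zero_of_row_eq_zero 0]
      intro j
      have : f 0 ≤ f j := hf.monotone (Fin.zero_le j)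
      simp only [Matrix.of_apply]
      rw [if_neg (by omega)]

noncomputable def TR_W (p q N : ℕ) : Matrix (Fin q) (Fin N) ℝ :=
  Matrix.of fun i t => if (i : ℕ) ≤ (t : ℕ) then (p.choose ((t : ℕ) - (i : ℕ)) : ℝ) else 0

noncomputable def TR_E (N : ℕ) : Matrix (Fin N) (Fin N) ℝ :=
  Matrix.of fun t t' => if (t : ℕ) ≤ (t' : ℕ) ∧ (t' : ℕ) ≤ (t : ℕ) + 1 then 1 else 0

theorem TR_E_split {N : ℕ} (t t' : Fin N) : TR_E N t t' =
    (if t' = t then 1 else 0) + (if (t' : ℕ) = (t : ℕ) + 1 then 1 else 0) := by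
  simp only [TR_E, Matrix.of_apply, Fin.ext_iff]
  split_ifs <;> simp_all <;> omega

theorem TR_W_succ (p q N : ℕ) : TR_W (p + 1) q N = TR_W p q N * TR_E N := by
  ext i t'
  rw [Matrix.mul_apply]
  simp only [TR_E_split, mul_add]
  rw [Finset.sum_add_distrib]
  have h1 : ∑ t : Fin N, TR_W p q N i t * (if t' = t then (1:ℝ) else 0)
      = TR_W p q N i t' := by
    rw [Finset.sum_eq_single t'] <;> simp +contextual [eq_comm]
  have h2 : ∑ t : Fin N, TR_W p q N i t * (if (t' : ℕ) = (t : ℕ) + 1 then (1:ℝ) else 0)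
      = if h : 1 ≤ (t' : ℕ) then TR_W p q N i ⟨(t' : ℕ) - 1, by omega⟩ else 0 := by
    split_ifs with h
    · rw [Finset.sum_eq_single (⟨(t' : ℕ) - 1, by omega⟩ : Fin N)]
      · rw [if_pos (by show (t' : ℕ) = (t' : ℕ) - 1 + 1; omega), mul_one]
      · intro t _ ht
        have ht' : (t : ℕ) ≠ (t' : ℕ) - 1 := fun hc => ht (Fin.ext hc)
        rw [if_neg (by omega), mul_zero]
      · simp
    · apply Finset.sum_eq_zero; intro t _
      rw [if_neg (by omega), mul_zero]
  rw [h1, h2]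
  simp only [TR_W, Matrix.of_apply]
  rcases Nat.lt_trichotomy (t' : ℕ) (i : ℕ) with hlt | heq | hgt
  · rw [if_neg (by omega), if_neg (by omega)]
    split_ifs with h1' h2'
    · exfalso; omega
    · simp
    · simp
  · rw [if_pos (by omega), if_pos (by omega)]
    have : (t' : ℕ) - (i : ℕ) = 0 := by omega
    rw [this]
    split_ifs with h1' h2'
    · exfalso; omega
    · simp
    · simp
  · rw [if_pos (by omega), if_pos (by omega), dif_pos (by omega)]
    rw [if_pos (by omega)]
    obtain ⟨k, hk⟩ : ∃ k, (t' : ℕ) - (i : ℕ) = k + 1 := ⟨(t' : ℕ) - i - 1, by omega⟩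
    have hk2 : (t' : ℕ) - 1 - (i : ℕ) = k := by omega
    rw [hk, hk2]
    push_cast [Nat.choose_succ_succ]
    ring

theorem TR_W_minor_nonneg (p q N : ℕ) :
    ∀ (f : Fin q → Fin N), StrictMono f → 0 ≤ ((TR_W p q N).submatrix id f).det := by
  induction p with
  | zero =>
    intro f hf
    have : (TR_W 0 q N).submatrix id f = Matrix.of fun i j : Fin q =>
        if ((f j : ℕ)) ≤ (i : ℕ) ∧ (i : ℕ) ≤ (f j : ℕ) + 0 then (1 : ℝ) else 0 := by
      ext i j
      simp only [Matrix.submatrix_apply, id_eq, TR_W, Matrix.of_apply]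
      rcases Nat.lt_or_ge ((f j : ℕ)) (i : ℕ) with h | h
      · rw [if_neg (by omega), if_neg (by omega)]
      · rcases Nat.eq_or_lt_of_le h with heq | hlt
        · rw [if_pos (by omega), if_pos (by omega)]
          have : (f j : ℕ) - (i : ℕ) = 0 := by omega
          simp [this]
        · rw [if_pos (by omega), if_neg (by omega)]
          obtain ⟨k, hk⟩ : ∃ k, (f j : ℕ) - (i : ℕ) = k + 1 := ⟨(f j : ℕ) - i - 1, by omega⟩
          simp [hk]
    rw [this]
    exact TR_staircase (e := 0) (by norm_num) q _ _
      (fun a b hab => hab) (fun a b hab => hf hab)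
  | succ p ih =>
    intro f hf
    have hsub : (TR_W (p+1) q N).submatrix id f = TR_W p q N * (TR_E N).submatrix id f := by
      rw [TR_W_succ]
      ext i j
      simp [Matrix.mul_apply]
    rw [hsub, TR_cauchyBinet]
    apply Finset.sum_nonneg
    intro g hg
    rw [Finset.mem_filter] at hg
    apply mul_nonneg (ih g hg.2)
    have : ((TR_E N).submatrix id f).submatrix g id = (TR_E N).submatrix g f := rfl
    rw [this, ← Matrix.det_transpose]
    have : ((TR_E N).submatrix g f)ᵀ = Matrix.of fun i j : Fin q =>
        if ((g j : ℕ)) ≤ ((f i : ℕ)) ∧ ((f i : ℕ)) ≤ (g j : ℕ) + 1 then (1 : ℝ) else 0 := by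
      ext i j
      simp [TR_E, Matrix.transpose_apply]
    rw [this]
    exact TR_staircase (le_refl 1) q _ _ (fun a b hab => hf hab) (fun a b hab => hg.2 hab)

theorem TR_vdm (p r k j N : ℕ) (hN : p + j < N) :
    ∑ t ∈ Finset.range N,
      (if k ≤ t then r.choose (t - k) else 0) * (if j ≤ t then p.choose (t - j) else 0)
    = if k ≤ p + j then (p + r).choose (p + j - k) else 0 := by
  rcases Nat.lt_or_ge (p + j) k with hk | hk
  · rw [if_neg (by omega)]
    apply Finset.sum_eq_zero
    intro t _
    rcases Nat.lt_or_ge t k with h | h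
    · rw [if_neg (by omega), zero_mul]
    · rw [if_pos (show k ≤ t by omega), if_pos (show j ≤ t by omega),
        Nat.choose_eq_zero_of_lt (show p < t - j by omega), mul_zero]
  · rw [if_pos hk]
    set K := p + j - k with hK
    have hsub : ∑ t ∈ Finset.range N,
        (if k ≤ t then r.choose (t - k) else 0) * (if j ≤ t then p.choose (t - j) else 0)
      = ∑ t ∈ (Finset.range N).filter (fun t => k ≤ t ∧ t ≤ p + j),
        (if k ≤ t then r.choose (t - k) else 0) * (if j ≤ t then p.choose (t - j) else 0) := by
      refine (Finset.sum_subset (Finset.filter_subset _ _) ?_).symm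
      intro t ht hnt
      simp only [Finset.mem_filter, Finset.mem_range] at ht hnt
      rcases Nat.lt_or_ge t k with h | h
      · rw [if_neg (by omega), zero_mul]
      · have hpt : p + j < t := by omega
        rw [if_pos (show k ≤ t by omega), if_pos (show j ≤ t by omega),
          Nat.choose_eq_zero_of_lt (show p < t - j by omega), mul_zero]
    rw [hsub, Nat.add_choose_eq, Finset.Nat.sum_antidiagonal_eq_sum_range_succ_mk]
    refine (Finset.sum_nbij' (fun a => p + j - a) (fun t => p + j - t) ?_ ?_ ?_ ?_ ?_).symm
    · intro a ha
      simp only [Finset.mem_range] at ha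
      simp only [Finset.mem_filter, Finset.mem_range]
      beta_reduce
      omega
    · intro t ht
      simp only [Finset.mem_filter, Finset.mem_range] at ht
      simp only [Finset.mem_range]
      beta_reduce
      omega
    · intro a ha; simp only [Finset.mem_range] at ha
      show p + j - (p + j - a) = a; omega
    · intro t ht; simp only [Finset.mem_filter, Finset.mem_range] at ht
      show p + j - (p + j - t) = t; omega
    · intro a ha
      simp only [Finset.mem_range] at ha
      beta_reduce
      rcases le_or_gt a p with hap | hap
      · rw [if_pos (by omega), if_pos (by omega)]
        have h1 : p + j - a - k = K - a := by omega
        have h2 : p + j - a - j = p - a := by omega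
        rw [h1, h2, Nat.choose_symm hap, mul_comm]
      · -- a > p : both sides zero
        have hja : ¬ (j ≤ p + j - a) := by omega
        rw [if_pos (show k ≤ p + j - a by omega), if_neg hja]
        simp [Nat.choose_eq_zero_of_lt hap]

noncomputable def TR_B (p q r : ℕ) : Matrix (Fin q) (Fin q) ℝ :=
  Matrix.of fun k j => if (k : ℕ) ≤ p + (j : ℕ) then
    (((p + r).choose (p + (j : ℕ) - (k : ℕ))) : ℝ) else 0

theorem TR_B_eq (p q r : ℕ) :
    TR_B p q r = TR_W r q (p + q + r) * (TR_W p q (p + q + r))ᵀ := by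
  ext k j
  rw [Matrix.mul_apply]
  have : ∀ t : Fin (p + q + r), TR_W r q (p+q+r) k t * (TR_W p q (p+q+r))ᵀ t j
      = (((if (k:ℕ) ≤ (t:ℕ) then r.choose ((t:ℕ) - k) else 0) *
          (if (j:ℕ) ≤ (t:ℕ) then p.choose ((t:ℕ) - j) else 0) : ℕ) : ℝ) := by
    intro t
    simp only [TR_W, Matrix.transpose_apply, Matrix.of_apply]
    push_cast [apply_ite (Nat.cast : ℕ → ℝ)]
    rfl
  simp only [this]
  rw [← Nat.cast_sum]
  rw [Fin.sum_univ_eq_sum_range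
    (fun t => (if (k:ℕ) ≤ t then r.choose (t - k) else 0) * (if (j:ℕ) ≤ t then p.choose (t - j) else 0))]
  rw [TR_vdm p r k j (p+q+r) (by omega)]
  simp only [TR_B, Matrix.of_apply, apply_ite (Nat.cast : ℕ → ℝ), Nat.cast_zero]

theorem TR_W_diag (p q N : ℕ) (f : Fin q → Fin N) (hf : ∀ i, (f i : ℕ) = (i : ℕ)) :
    ((TR_W p q N).submatrix id f).det = 1 := by
  have htri : ((TR_W p q N).submatrix id f).BlockTriangular id := by
    intro i j hij
    have hij' : (j : ℕ) < (i : ℕ) := hij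
    simp only [Matrix.submatrix_apply, id_eq, TR_W, Matrix.of_apply, hf]
    rw [if_neg (by omega)]
  rw [Matrix.det_of_upperTriangular htri]
  apply Finset.prod_eq_one
  intro i _
  simp only [Matrix.submatrix_apply, id_eq, TR_W, Matrix.of_apply, hf]
  rw [if_pos (le_refl _), Nat.sub_self, Nat.choose_zero_right, Nat.cast_one]

theorem TR_B_pos (p q r : ℕ) : 0 < (TR_B p q r).det := by
  rw [TR_B_eq, TR_cauchyBinet]
  apply Finset.sum_pos'
  · intro f hf
    rw [Finset.mem_filter] at hf
    apply mul_nonneg (TR_W_minor_nonneg r q _ f hf.2)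
    have : ((TR_W p q (p+q+r))ᵀ).submatrix f id = ((TR_W p q (p+q+r)).submatrix id f)ᵀ := rfl
    rw [this, Matrix.det_transpose]
    exact TR_W_minor_nonneg p q _ f hf.2
  · refine ⟨fun i => Fin.castLE (by omega) i, ?_, ?_⟩
    · rw [Finset.mem_filter]
      exact ⟨Finset.mem_univ _, fun a b hab => Fin.strictMono_castLE _ hab⟩
    · have e2' : (((TR_W p q (p+q+r))ᵀ).submatrix (fun i => Fin.castLE (by omega : q ≤ p+q+r) i) id).det
          = (((TR_W p q (p+q+r))).submatrix id (fun i => Fin.castLE (by omega : q ≤ p+q+r) i)).det := by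
        rw [show (((TR_W p q (p+q+r))ᵀ).submatrix (fun i => Fin.castLE (by omega : q ≤ p+q+r) i) id)
            = (((TR_W p q (p+q+r))).submatrix id (fun i => Fin.castLE (by omega : q ≤ p+q+r) i))ᵀ from rfl,
          Matrix.det_transpose]
      rw [e2', TR_W_diag r q (p+q+r) _ (fun i => rfl), TR_W_diag p q (p+q+r) _ (fun i => rfl)]
      norm_num

-- assume defs wedge, Xw, tripleRatio, ver present (concatenated later)

theorem TR_append3 {α : Sort*} {p q r : ℕ} (u : Fin p → α) (v : Fin q → α) (w : Fin r → α)
    (j : Fin (p + q + r)) :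
    Fin.append (Fin.append u v) w j =
      if h1 : (j : ℕ) < p then u ⟨j, h1⟩
      else if h2 : (j : ℕ) < p + q then v ⟨(j : ℕ) - p, by omega⟩
      else w ⟨(j : ℕ) - (p + q), by omega⟩ := by
  rcases Nat.lt_or_ge (j : ℕ) (p + q) with hpq | hpq
  · have hj : j = Fin.castAdd r ⟨(j : ℕ), hpq⟩ := Fin.ext (by simp)
    conv_lhs => rw [hj, Fin.append_left]
    rcases Nat.lt_or_ge (j : ℕ) p with hp | hp
    · have h2 : (⟨(j : ℕ), hpq⟩ : Fin (p + q)) = Fin.castAdd q ⟨(j : ℕ), hp⟩ := Fin.ext (by simp)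
      conv_lhs => rw [h2, Fin.append_left]
      rw [dif_pos hp]
    · have h2 : (⟨(j : ℕ), hpq⟩ : Fin (p + q)) = Fin.natAdd p ⟨(j : ℕ) - p, by omega⟩ :=
        Fin.ext (by simp; omega)
      conv_lhs => rw [h2, Fin.append_right]
      rw [dif_neg (by omega), dif_pos hpq]
  · have hj : j = Fin.natAdd (p + q) ⟨(j : ℕ) - (p + q), by omega⟩ := Fin.ext (by simp; omega)
    conv_lhs => rw [hj, Fin.append_right]
    rw [dif_neg (by omega), dif_neg (by omega)]

theorem TR_wedge_eq (n p q r : ℕ) (h : p + q + r = n) :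
    wedge h (ver n none p) (ver n (some 1) q) (ver n (some 0) r) = (TR_B p q r).det := by
  set u := ver n none p with hu
  set v := ver n (some 1) q with hv
  set w := ver n (some 0) r with hw
  set M : Matrix (Fin n) (Fin n) ℝ :=
    Matrix.of (fun i j => Fin.append (Fin.append u v) w (Fin.cast h.symm i) j) with hM
  have hwedge : wedge h u v w = M.det := rfl
  -- entry evaluation
  have hMval : ∀ (i j : Fin n), M i j =
      if h1 : (i : ℕ) < p then u ⟨i, h1⟩ j
      else if h2 : (i : ℕ) < p + q then v ⟨(i : ℕ) - p, by omega⟩ j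
      else w ⟨(i : ℕ) - (p + q), by omega⟩ j := by
    intro i j
    show Fin.append (Fin.append u v) w (Fin.cast h.symm i) j = _
    rw [TR_append3]
    have hval : ((Fin.cast h.symm i : Fin (p + q + r)) : ℕ) = (i : ℕ) := rfl
    simp only [hval]
    split_ifs <;> rfl
  -- rows
  have hrow_u : ∀ (i j : Fin n) (hi : (i : ℕ) < p),
      M i j = if (j : ℕ) = (i : ℕ) then 1 else 0 := by
    intro i j hi
    rw [hMval, dif_pos hi]
    rfl
  have hrow_v : ∀ (i j : Fin n) (hi1 : p ≤ (i : ℕ)) (hi2 : (i : ℕ) < p + q),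
      M i j = if (i : ℕ) - p ≤ (j : ℕ) then (((p + r).choose ((j : ℕ) - ((i : ℕ) - p))) : ℝ)
        else 0 := by
    intro i j hi1 hi2
    rw [hMval, dif_neg (by omega), dif_pos hi2]
    show (if ((⟨(i : ℕ) - p, _⟩ : Fin q) : ℕ) ≤ (j : ℕ) then
        ((n - q).choose ((j : ℕ) - ((⟨(i : ℕ) - p, by omega⟩ : Fin q) : ℕ)) : ℝ) *
          (1 : ℝ) ^ ((n - q) - ((j : ℕ) - ((⟨(i : ℕ) - p, by omega⟩ : Fin q) : ℕ))) else 0) = _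
    have hnq : n - q = p + r := by omega
    simp only [Fin.val_mk, one_pow, mul_one, hnq]
  have hrow_w : ∀ (i j : Fin n) (hi : p + q ≤ (i : ℕ)),
      M i j = if (j : ℕ) = (i : ℕ) then 1 else 0 := by
    intro i j hi
    rw [hMval, dif_neg (by omega), dif_neg (by omega)]
    show (if ((⟨(i : ℕ) - (p + q), _⟩ : Fin r) : ℕ) ≤ (j : ℕ) then
        ((n - r).choose ((j : ℕ) - ((i : ℕ) - (p + q))) : ℝ) *
          (0 : ℝ) ^ ((n - r) - ((j : ℕ) - ((i : ℕ) - (p + q)))) else 0) = _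
    simp only [Fin.val_mk]
    have hnr : n - r = p + q := by omega
    set k := (i : ℕ) - (p + q) with hk
    have hin : (i : ℕ) < n := i.isLt
    rcases Nat.lt_or_ge (j : ℕ) k with h1 | h1
    · rw [if_neg (by omega), eq_comm, if_neg (by omega)]
    · rw [if_pos (by omega)]
      rcases Nat.lt_trichotomy ((j : ℕ) - k) (n - r) with h2 | h2 | h2
      · rw [zero_pow (by omega), mul_zero, eq_comm, if_neg (by omega)]
      · rw [h2, Nat.sub_self, pow_zero, mul_one, Nat.choose_self, Nat.cast_one,
          if_pos (by omega)]
      · rw [Nat.choose_eq_zero_of_lt h2, Nat.cast_zero, zero_mul, eq_comm, if_neg (by omega)]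
  -- first block split
  have hn1 : p + (q + r) = n := by omega
  set E1 : Fin p ⊕ Fin (q + r) ≃ Fin n := finSumFinEquiv.trans (finCongr hn1) with hE1
  have hval1l : ∀ x : Fin p, ((E1 (Sum.inl x)) : ℕ) = (x : ℕ) := by
    intro x; simp [hE1]
  have hval1r : ∀ z : Fin (q + r), ((E1 (Sum.inr z)) : ℕ) = p + (z : ℕ) := by
    intro x; simp [hE1]
  have hdet1 : M.det = (M.submatrix E1 E1).det := (Matrix.det_submatrix_equiv_self E1 M).symm
  set D : Matrix (Fin (q + r)) (Fin (q + r)) ℝ :=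
    Matrix.of (fun x y => M (E1 (Sum.inr x)) (E1 (Sum.inr y))) with hD
  have hsplit1 : M.submatrix E1 E1 = Matrix.fromBlocks 1 0
      (Matrix.of fun x y => M (E1 (Sum.inr x)) (E1 (Sum.inl y))) D := by
    ext x y
    rcases x with x | x <;> rcases y with y | y
    · simp only [Matrix.submatrix_apply, Matrix.fromBlocks_apply₁₁]
      rw [hrow_u _ _ (by rw [hval1l]; exact x.isLt), Matrix.one_apply]
      simp only [hval1l]
      by_cases hxy : x = y
      · rw [if_pos (by rw [hxy]), if_pos hxy]
      · rw [if_neg (fun hc => hxy (Fin.ext (by omega))), if_neg hxy]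
    · simp only [Matrix.submatrix_apply, Matrix.fromBlocks_apply₁₂, Matrix.zero_apply]
      rw [hrow_u _ _ (by rw [hval1l]; exact x.isLt)]
      rw [if_neg (by rw [hval1l, hval1r]; omega)]
    · simp only [Matrix.submatrix_apply, Matrix.fromBlocks_apply₂₁, Matrix.of_apply]
    · simp only [Matrix.submatrix_apply, Matrix.fromBlocks_apply₂₂, hD, Matrix.of_apply]
  -- second block split
  -- second block split
  set E2 : Fin q ⊕ Fin r ≃ Fin (q + r) := finSumFinEquiv with hE2
  have hval2l : ∀ x : Fin q, ((E2 (Sum.inl x)) : ℕ) = (x : ℕ) := by intro x; simp [hE2]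
  have hval2r : ∀ z : Fin r, ((E2 (Sum.inr z)) : ℕ) = q + (z : ℕ) := by intro x; simp [hE2]
  have hdet2 : D.det = (D.submatrix E2 E2).det := (Matrix.det_submatrix_equiv_self E2 D).symm
  have hsplit2 : D.submatrix E2 E2 = Matrix.fromBlocks (TR_B p q r)
      (Matrix.of fun x y => D (E2 (Sum.inl x)) (E2 (Sum.inr y))) 0 1 := by
    ext x y
    rcases x with x | x <;> rcases y with y | y
    · simp only [Matrix.submatrix_apply, Matrix.fromBlocks_apply₁₁]
      show M (E1 (Sum.inr (E2 (Sum.inl x)))) (E1 (Sum.inr (E2 (Sum.inl y)))) = _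
      rw [hrow_v _ _ (by rw [hval1r]; omega) (by rw [hval1r, hval2l]; omega)]
      simp only [hval1r, hval2l, TR_B, Matrix.of_apply]
      have e1 : p + (x : ℕ) - p = (x : ℕ) := by omega
      rw [e1]
    · simp only [Matrix.submatrix_apply, Matrix.fromBlocks_apply₁₂, Matrix.of_apply]
    · simp only [Matrix.submatrix_apply, Matrix.fromBlocks_apply₂₁, Matrix.zero_apply]
      show M (E1 (Sum.inr (E2 (Sum.inr x)))) (E1 (Sum.inr (E2 (Sum.inl y)))) = _
      rw [hrow_w _ _ (by rw [hval1r, hval2r]; omega)]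
      rw [if_neg (by rw [hval1r (E2 (Sum.inl y)), hval1r (E2 (Sum.inr x)), hval2l, hval2r]; omega)]
    · simp only [Matrix.submatrix_apply, Matrix.fromBlocks_apply₂₂]
      show M (E1 (Sum.inr (E2 (Sum.inr x)))) (E1 (Sum.inr (E2 (Sum.inr y)))) = _
      rw [hrow_w _ _ (by rw [hval1r, hval2r]; omega), Matrix.one_apply]
      simp only [hval1r, hval2r]
      by_cases hxy : x = y
      · rw [if_pos (by rw [hxy]), if_pos hxy]
      · rw [if_neg (fun hc => hxy (Fin.ext (by omega))), if_neg hxy]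
  rw [hwedge, hdet1, hsplit1, Matrix.det_fromBlocks_zero₁₂, Matrix.det_one, one_mul,
    hdet2, hsplit2, Matrix.det_fromBlocks_zero₂₁, Matrix.det_one, mul_one]

end TRaux

/-- for `p, q, r ≥ 1` with `p + q + r = n`, the triple ratio of the
Veronese flags `ξ(∞), ξ(1), ξ(0)` is positive; equivalently, the triangle invariant
`τ_{pqr} = log T_{pqr}(ξ(∞), ξ(1), ξ(0))` of any `n`-Fuchsian representation is a
well-defined real number. -/

theorem tripleRatio_veronese_pos (n p q r : ℕ) (hn : 2 ≤ n)
    (hp : 1 ≤ p) (hq : 1 ≤ q) (hr : 1 ≤ r) (hpqr : p + q + r = n) :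
    0 < tripleRatio n (ver n none) (ver n (some 1)) (ver n (some 0)) p q r := by
  have hX : ∀ p' q' r' : ℕ, p' + q' + r' = n →
      Xw n (ver n none) (ver n (some 1)) (ver n (some 0)) p' q' r' = (TR_B p' q' r').det := by
    intro p' q' r' h
    rw [Xw, dif_pos h, TR_wedge_eq]
  rw [tripleRatio,
    hX (p+1) q (r-1) (by omega), hX (p-1) q (r+1) (by omega),
    hX p (q-1) (r+1) (by omega), hX p (q+1) (r-1) (by omega),
    hX (p-1) (q+1) r (by omega), hX (p+1) (q-1) r (by omega)]
  exact mul_pos (mul_pos (div_pos (TR_B_pos _ _ _) (TR_B_pos _ _ _))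
    (div_pos (TR_B_pos _ _ _) (TR_B_pos _ _ _))) (div_pos (TR_B_pos _ _ _) (TR_B_pos _ _ _))
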